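/- arXiv:0902.2774 — 2 statements merged into one kernel-verified Lean document; each statement's English description precedes it below -/
import Mathlib

section
/- For any two sets A, B ⊆ {0,1}^{2n}, the discrepancy of the rectangle A × B with respect to the inner-product-mod-2 matrix satisfies Disc(A × B) = 2^{-4n} · |∑_{x∈A} ∑_{y∈B} (-1)^{x⊙y}| ≤ 2^{-3n} · √(|A|·|B|). -/
/-- Binary inner product (number of positions where both strings have bit 1). -/
def ip (x y : List Bool) : ℕ := (List.zipWith (· && ·) x y).count true

/-- Discrepancy of a set of pairs of strings, w.r.t. the inner-product-mod-2 matrix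
at size parameter `n` (strings of length `2n`). -/
noncomputable def Disc (n : ℕ) (T : Finset (List Bool × List Bool)) : ℝ :=
  ((2:ℝ)^(4*n))⁻¹ * |∑ p ∈ T, (-1 : ℝ)^(ip p.1 p.2)|

/-- All boolean strings of length `m`. -/
def allB : ℕ → Finset (List Bool)
  | 0 => {[]}
  | m+1 => ((allB m).image (List.cons false)) ∪ ((allB m).image (List.cons true))

lemma mem_allB_of_length : ∀ (m : ℕ) (x : List Bool), x.length = m → x ∈ allB m
  | 0, x, h => by simp [allB, List.length_eq_zero_iff.mp h]
  | m+1, [], h => by simp at h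
  | m+1, (b :: xs), h => by
      have hx : xs ∈ allB m := mem_allB_of_length m xs (by simpa using h)
      cases b
      · exact Finset.mem_union_left _ (Finset.mem_image_of_mem _ hx)
      · exact Finset.mem_union_right _ (Finset.mem_image_of_mem _ hx)

lemma ip_cons (b c : Bool) (x y : List Bool) :
    ip (b :: x) (c :: y) = (if (b && c) = true then 1 else 0) + ip x y := by
  simp [ip, List.count_cons, Nat.add_comm]

lemma sum_allB_succ (m : ℕ) (f : List Bool → ℝ) :
    ∑ x ∈ allB (m+1), f x = ∑ x ∈ allB m, f (false :: x) + ∑ x ∈ allB m, f (true :: x) := by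
  rw [show allB (m+1) = ((allB m).image (List.cons false)) ∪ ((allB m).image (List.cons true))
      from rfl]
  rw [Finset.sum_union, Finset.sum_image (by intros; simp_all),
    Finset.sum_image (by intros; simp_all)]
  rw [Finset.disjoint_left]
  rintro a ha hb
  simp only [Finset.mem_image] at ha hb
  obtain ⟨u, -, rfl⟩ := ha
  obtain ⟨v, -, hv⟩ := hb
  simp at hv

lemma orth : ∀ (m : ℕ) (y y' : List Bool), y.length = m → y'.length = m →
    ∑ x ∈ allB m, (-1:ℝ)^(ip x y) * (-1:ℝ)^(ip x y')
      = if y = y' then (2:ℝ)^m else 0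
  | 0, y, y', hy, hy' => by
      rw [List.length_eq_zero_iff.mp hy, List.length_eq_zero_iff.mp hy']
      simp [allB, ip]
  | m+1, [], y', hy, hy' => by simp at hy
  | m+1, (c :: ys), [], hy, hy' => by simp at hy'
  | m+1, (c :: ys), (c' :: ys'), hy, hy' => by
      have hys : ys.length = m := by simpa using hy
      have hys' : ys'.length = m := by simpa using hy'
      have IH := orth m ys ys' hys hys'
      set ε : ℝ := (if c = true then (-1:ℝ) else 1) * (if c' = true then (-1:ℝ) else 1) with hε
      have h0 : ∀ x : List Bool, (-1:ℝ)^(ip (false::x) (c::ys)) * (-1)^(ip (false::x) (c'::ys'))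
          = (-1:ℝ)^(ip x ys) * (-1)^(ip x ys') := by
        intro x; simp [ip_cons]
      have h1 : ∀ x : List Bool, (-1:ℝ)^(ip (true::x) (c::ys)) * (-1)^(ip (true::x) (c'::ys'))
          = ε * ((-1:ℝ)^(ip x ys) * (-1)^(ip x ys')) := by
        intro x; cases c <;> cases c' <;> simp [hε, ip_cons, pow_add] <;> ring
      rw [sum_allB_succ]
      have : (∑ x ∈ allB m, (-1:ℝ)^(ip (false::x) (c::ys)) * (-1)^(ip (false::x) (c'::ys')))
          + (∑ x ∈ allB m, (-1:ℝ)^(ip (true::x) (c::ys)) * (-1)^(ip (true::x) (c'::ys')))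
          = (1 + ε) * (if ys = ys' then (2:ℝ)^m else 0) := by
        rw [Finset.sum_congr rfl (fun x _ => h0 x), Finset.sum_congr rfl (fun x _ => h1 x),
          ← Finset.mul_sum, IH]
        ring
      rw [this]
      cases c <;> cases c'
      · simp only [hε]
        by_cases h : ys = ys' <;> simp [h, pow_succ] <;> ring
      · simp only [hε]
        have : (false :: ys) ≠ (true :: ys') := by simp
        simp [this]
      · simp only [hε]
        have : (true :: ys) ≠ (false :: ys') := by simp
        simp [this]
      · simp only [hε]
        by_cases h : ys = ys' <;> simp [h, pow_succ] <;> ring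

theorem stmt0 (n : ℕ) (A B : Finset (List Bool))
    (hA : ∀ x ∈ A, x.length = 2*n) (hB : ∀ y ∈ B, y.length = 2*n) :
    Disc n (A ×ˢ B) ≤ ((2:ℝ)^(3*n))⁻¹ * Real.sqrt ((A.card : ℝ) * (B.card : ℝ)) := by
  classical
  set g : List Bool → ℝ := fun x => ∑ y ∈ B, (-1:ℝ)^(ip x y) with hg
  set S : ℝ := ∑ x ∈ A, g x with hS
  -- sum over product
  have hprod : ∑ p ∈ A ×ˢ B, (-1:ℝ)^(ip p.1 p.2) = S := by
    rw [Finset.sum_product]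
  -- Cauchy-Schwarz
  have cauchy : S^2 ≤ (A.card : ℝ) * ∑ x ∈ A, (g x)^2 := by
    simpa using sq_sum_le_card_mul_sum_sq (s := A) (f := g)
  -- extend to all strings
  have hsub : A ⊆ allB (2*n) := fun x hx => mem_allB_of_length _ x (hA x hx)
  have ext : ∑ x ∈ A, (g x)^2 ≤ ∑ x ∈ allB (2*n), (g x)^2 :=
    Finset.sum_le_sum_of_subset_of_nonneg hsub (fun _ _ _ => sq_nonneg _)
  -- orthogonality computation
  have key : ∑ x ∈ allB (2*n), (g x)^2 = (B.card : ℝ) * 2^(2*n) := by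
    have : ∀ x : List Bool, (g x)^2
        = ∑ y ∈ B, ∑ y' ∈ B, (-1:ℝ)^(ip x y) * (-1)^(ip x y') := by
      intro x
      rw [sq, hg, Finset.sum_mul_sum]
    rw [Finset.sum_congr rfl (fun x _ => this x), Finset.sum_comm]
    have : ∀ y ∈ B, ∑ x ∈ allB (2*n), ∑ y' ∈ B, (-1:ℝ)^(ip x y) * (-1)^(ip x y')
        = (2:ℝ)^(2*n) := by
      intro y hy
      rw [Finset.sum_comm]
      have hrow : ∀ y' ∈ B, ∑ x ∈ allB (2*n), (-1:ℝ)^(ip x y) * (-1)^(ip x y')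
          = if y = y' then (2:ℝ)^(2*n) else 0 := by
        intro y' hy'
        exact orth (2*n) y y' (hB y hy) (hB y' hy')
      rw [Finset.sum_congr rfl hrow]
      rw [Finset.sum_ite_eq B y (fun _ => (2:ℝ)^(2*n))]
      simp [hy]
    rw [Finset.sum_congr rfl this]
    simp [mul_comm]
  have hS2 : S^2 ≤ (A.card : ℝ) * (B.card : ℝ) * 2^(2*n) := by
    calc S^2 ≤ (A.card : ℝ) * ∑ x ∈ A, (g x)^2 := cauchy
    _ ≤ (A.card : ℝ) * ((B.card : ℝ) * 2^(2*n)) := by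
        apply mul_le_mul_of_nonneg_left _ (Nat.cast_nonneg _)
        rw [← key]; exact ext
    _ = (A.card : ℝ) * (B.card : ℝ) * 2^(2*n) := by ring
  have habs : |S| ≤ (2:ℝ)^n * Real.sqrt ((A.card : ℝ) * (B.card : ℝ)) := by
    have h1 : |S| = Real.sqrt (S^2) := (Real.sqrt_sq_eq_abs S).symm
    rw [h1]
    have h2 : Real.sqrt (S^2) ≤ Real.sqrt ((A.card : ℝ) * (B.card : ℝ) * 2^(2*n)) :=
      Real.sqrt_le_sqrt hS2
    refine h2.trans_eq ?_
    rw [Real.sqrt_mul (by positivity), mul_comm]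
    congr 1
    rw [show (2:ℝ)^(2*n) = ((2:ℝ)^n)^2 by rw [← pow_mul, Nat.mul_comm]]
    exact Real.sqrt_sq (by positivity)
  rw [Disc, hprod]
  calc ((2:ℝ)^(4*n))⁻¹ * |S|
      ≤ ((2:ℝ)^(4*n))⁻¹ * ((2:ℝ)^n * Real.sqrt ((A.card : ℝ) * (B.card : ℝ))) := by
        apply mul_le_mul_of_nonneg_left habs (by positivity)
    _ = ((2:ℝ)^(3*n))⁻¹ * Real.sqrt ((A.card : ℝ) * (B.card : ℝ)) := by
        rw [show 4*n = 3*n + n by ring, pow_add]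
        field_simp
end

section
/- The generator G (defined by the case analysis in the context) is almost 1-1 on inputs of length 4n+1: the number of distinct output values on the 2^{4n+1} inputs of the form xybz (|x| = n, |y| = 2n, b ∈ {0,1}, |z| = n) is at least 2^{4n+1} − 2^{2n}; equivalently, G is at most two-to-one, and it is two-to-one only on pairs of inputs of the form {x 0^{2n} 1 z, x 0^{2n} 0 z}, which map to the common value x 1 0^{2n} 1 z. -/
def flipAt (l : List Bool) (i : ℕ) : List Bool := l.set i (! l.getD i false)

def Gout (n : ℕ) (x y : List Bool) (b : Bool) (z : List Bool) : List Bool :=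
  if ip (z ++ x) y % 2 = 1 then x ++ [!b] ++ y ++ [b] ++ z
  else if b = true then x ++ [true] ++ y ++ [true] ++ z
  else if y.all (fun c => !c) then x ++ [true] ++ y ++ [true] ++ z
  else if y.findIdx (fun c => c) + 1 ≤ n - 1 then
    x ++ [false] ++ y ++ [false] ++ flipAt z (y.findIdx (fun c => c))
  else
    flipAt x (y.findIdx (fun c => c) - n) ++ [false] ++ y ++ [false] ++ z

lemma flipAt_length (l : List Bool) (i : ℕ) : (flipAt l i).length = l.length := by
  simp [flipAt]

lemma flipAt_inj {l l' : List Bool} {i : ℕ} (hl : l.length = l'.length)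
    (h : flipAt l i = flipAt l' i) : l = l' := by
  apply List.ext_getElem hl
  intro j hj hj'
  rcases eq_or_ne i j with rfl | hne
  · have h1 : (flipAt l i)[i]'(by simpa [flipAt]) = (flipAt l' i)[i]'(by simpa [flipAt]) := by
      simp_rw [h]
    simp only [flipAt] at h1
    rw [List.getElem_set_self, List.getElem_set_self] at h1
    have h2 : l.getD i false = l'.getD i false := by
      cases hb : l.getD i false <;> cases hb' : l'.getD i false <;> simp_all
    simpa [List.getD_eq_getElem?_getD, List.getElem?_eq_getElem, hj, hj'] using h2
  · have h1 : (flipAt l i)[j]'(by simpa [flipAt]) = (flipAt l' i)[j]'(by simpa [flipAt]) := by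
      simp_rw [h]
    simp only [flipAt] at h1
    rwa [List.getElem_set_ne hne, List.getElem_set_ne hne] at h1

lemma decomp {X X' Y Y' Z Z' : List Bool} {c c' d d' : Bool}
    (hX : X.length = X'.length) (hY : Y.length = Y'.length)
    (h : X ++ [c] ++ Y ++ [d] ++ Z = X' ++ [c'] ++ Y' ++ [d'] ++ Z') :
    X = X' ∧ c = c' ∧ Y = Y' ∧ d = d' ∧ Z = Z' := by
  rw [List.append_assoc, List.append_assoc, List.append_assoc,
      List.append_assoc, List.append_assoc, List.append_assoc] at h
  obtain ⟨h1, h2⟩ := List.append_inj h hX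
  obtain ⟨h3, h4⟩ := List.append_inj h2 (by simp)
  obtain ⟨h5, h6⟩ := List.append_inj h4 hY
  obtain ⟨h7, h8⟩ := List.append_inj h6 (by simp)
  simp_all

lemma all_repl {y : List Bool} {m : ℕ} (hy : y.length = m)
    (h : (y.all fun c => !c) = true) : y = List.replicate m false := by
  rw [List.eq_replicate_iff]
  exact ⟨hy, fun c hc => by simpa using List.all_eq_true.mp h c hc⟩

lemma key (n : ℕ) (x y : List Bool) (b : Bool) (z x' y' : List Bool) (b' : Bool) (z' : List Bool)
    (hx : x.length = n) (hy : y.length = 2*n) (hz : z.length = n)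
    (hx' : x'.length = n) (hy' : y'.length = 2*n) (hz' : z'.length = n)
    (hne : (x, y, b, z) ≠ (x', y', b', z'))
    (heq : Gout n x y b z = Gout n x' y' b' z') :
    x = x' ∧ z = z' ∧ y = List.replicate (2*n) false ∧
      y' = List.replicate (2*n) false ∧ b ≠ b' ∧
      Gout n x y b z = x ++ [true] ++ y ++ [true] ++ z := by
  unfold Gout at heq
  split_ifs at heq with c1 c2 c3 c4 c5 c6 c7 c8 <;>
    obtain ⟨e1, e2, e3, e4, e5⟩ := decomp (by simp [flipAt_length, hx, hx']) (by rw [hy, hy']) heq <;>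
    try (exfalso; simp_all; done)
  · rename_i hall
    have hyr : y' = List.replicate (2*n) false := all_repl hy' hall
    refine ⟨e1, e5, e3 ▸ hyr, hyr, fun hbb => c8 (hbb ▸ c6), ?_⟩
    simp only [Gout, if_neg c1, if_pos c6]
  · rename_i hall hip2 hb'
    have hyr : y = List.replicate (2*n) false := all_repl hy hall
    refine ⟨e1, e5, hyr, e3 ▸ hyr, fun hbb => c6 (hbb.trans hb'), ?_⟩
    simp only [Gout, if_neg c1, if_neg c6, if_pos hall]
  · exfalso
    rw [← e3] at e5
    have hzz : z = z' := flipAt_inj (hz.trans hz'.symm) e5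
    rename_i h1 h2 h3 h4 h5 h6
    apply hne
    have hb : b = b' := by
      rw [Bool.not_eq_true] at c6 h4; rw [c6, h4]
    rw [e1, e3, hzz, hb]
  · exfalso
    rw [← e3] at e1
    have hxx : x = x' := flipAt_inj (hx.trans hx'.symm) e1
    rename_i h1 h2 h3 h4 h5 h6
    apply hne
    have hb : b = b' := by
      rw [Bool.not_eq_true] at c6 h4; rw [c6, h4]
    rw [hxx, e3, e5, hb]


lemma ofFn_getD {l : List Bool} {n : ℕ} (h : l.length = n) :
    List.ofFn (fun i : Fin n => l.getD i false) = l := by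
  apply List.ext_getElem (by simp [h])
  intro i h1 h2
  simp [List.getD_eq_getElem?_getD, List.getElem?_eq_getElem h2]

def eFun (n : ℕ) : ((Fin n → Bool) × (Fin (2*n) → Bool) × Bool × (Fin n → Bool)) →
    List Bool × List Bool × Bool × List Bool :=
  fun p => (List.ofFn p.1, List.ofFn p.2.1, p.2.2.1, List.ofFn p.2.2.2)

def eFun' (n : ℕ) : ((Fin n → Bool) × (Fin n → Bool)) →
    List Bool × List Bool × Bool × List Bool :=
  fun p => (List.ofFn p.1, List.replicate (2*n) false, false, List.ofFn p.2)

lemma eFun_inj (n : ℕ) : Function.Injective (eFun n) := by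
  intro p q h
  simp only [eFun, Prod.mk.injEq, List.ofFn_inj] at h
  exact Prod.ext_iff.mpr ⟨h.1, Prod.ext_iff.mpr ⟨h.2.1, Prod.ext_iff.mpr ⟨h.2.2.1, h.2.2.2⟩⟩⟩

lemma eFun'_inj (n : ℕ) : Function.Injective (eFun' n) := by
  intro p q h
  simp only [eFun', Prod.mk.injEq, List.ofFn_inj] at h
  exact Prod.ext_iff.mpr ⟨h.1, h.2.2.2⟩

lemma full_range (n : ℕ) :
    {p : List Bool × List Bool × Bool × List Bool |
      p.1.length = n ∧ p.2.1.length = 2*n ∧ p.2.2.2.length = n} = Set.range (eFun n) := by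
  ext p
  simp only [Set.mem_setOf_eq, Set.mem_range]
  constructor
  · rintro ⟨h1, h2, h3⟩
    refine ⟨(fun i => p.1.getD i false, fun i => p.2.1.getD i false, p.2.2.1,
      fun i => p.2.2.2.getD i false), ?_⟩
    simp only [eFun]
    exact Prod.ext_iff.mpr ⟨ofFn_getD h1, Prod.ext_iff.mpr ⟨ofFn_getD h2,
      Prod.ext_iff.mpr ⟨rfl, ofFn_getD h3⟩⟩⟩
  · rintro ⟨q, rfl⟩
    exact ⟨by simp [eFun], by simp [eFun], by simp [eFun]⟩

lemma bad_range (n : ℕ) :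
    {p : List Bool × List Bool × Bool × List Bool |
      (p.1.length = n ∧ p.2.1.length = 2*n ∧ p.2.2.2.length = n) ∧
      p.2.1 = List.replicate (2*n) false ∧ p.2.2.1 = false} = Set.range (eFun' n) := by
  ext p
  simp only [Set.mem_setOf_eq, Set.mem_range]
  constructor
  · rintro ⟨⟨h1, h2, h3⟩, h4, h5⟩
    refine ⟨(fun i => p.1.getD i false, fun i => p.2.2.2.getD i false), ?_⟩
    simp only [eFun']
    exact Prod.ext_iff.mpr ⟨ofFn_getD h1, Prod.ext_iff.mpr ⟨h4.symm,
      Prod.ext_iff.mpr ⟨h5.symm, ofFn_getD h3⟩⟩⟩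
  · rintro ⟨q, rfl⟩
    exact ⟨⟨by simp [eFun'], by simp [eFun'], by simp [eFun']⟩, by simp [eFun'], by simp [eFun']⟩

theorem stmt6 (n : ℕ) (hn : 1 ≤ n) :
    (2^(4*n+1) - 2^(2*n) ≤
      Set.ncard {u : List Bool | ∃ (x y : List Bool) (b : Bool) (z : List Bool),
        x.length = n ∧ y.length = 2*n ∧ z.length = n ∧ u = Gout n x y b z}) ∧
    (∀ (x y : List Bool) (b : Bool) (z x' y' : List Bool) (b' : Bool) (z' : List Bool),
      x.length = n → y.length = 2*n → z.length = n →
      x'.length = n → y'.length = 2*n → z'.length = n →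
      (x, y, b, z) ≠ (x', y', b', z') →
      Gout n x y b z = Gout n x' y' b' z' →
      x = x' ∧ z = z' ∧ y = List.replicate (2*n) false ∧
        y' = List.replicate (2*n) false ∧ b ≠ b' ∧
        Gout n x y b z = x ++ [true] ++ y ++ [true] ++ z) := by
  constructor
  · set Gmap : List Bool × List Bool × Bool × List Bool → List Bool :=
      fun p => Gout n p.1 p.2.1 p.2.2.1 p.2.2.2 with hGmap
    set Full : Set (List Bool × List Bool × Bool × List Bool) :=
      {p | p.1.length = n ∧ p.2.1.length = 2*n ∧ p.2.2.2.length = n} with hFull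
    set Bad : Set (List Bool × List Bool × Bool × List Bool) :=
      {p | (p.1.length = n ∧ p.2.1.length = 2*n ∧ p.2.2.2.length = n) ∧
        p.2.1 = List.replicate (2*n) false ∧ p.2.2.1 = false} with hBad
    have hSim : {u : List Bool | ∃ (x y : List Bool) (b : Bool) (z : List Bool),
        x.length = n ∧ y.length = 2*n ∧ z.length = n ∧ u = Gout n x y b z} = Gmap '' Full := by
      ext u
      constructor
      · rintro ⟨x, y, b, z, h1, h2, h3, rfl⟩
        exact ⟨(x, y, b, z), ⟨h1, h2, h3⟩, rfl⟩
      · rintro ⟨⟨x, y, b, z⟩, ⟨h1, h2, h3⟩, rfl⟩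
        exact ⟨x, y, b, z, h1, h2, h3, rfl⟩
    rw [hSim]
    have hFullRange : Full = Set.range (eFun n) := full_range n
    have hBadRange : Bad = Set.range (eFun' n) := bad_range n
    have hFullFin : Full.Finite := hFullRange ▸ Set.finite_range _
    have hBadFin : Bad.Finite := hBadRange ▸ Set.finite_range _
    have hBadSub : Bad ⊆ Full := fun p hp => hp.1
    have hFullCard : Full.ncard = 2^(4*n+1) := by
      rw [hFullRange, ← Set.image_univ, Set.ncard_image_of_injective _ (eFun_inj n),
        Set.ncard_univ, Nat.card_eq_fintype_card]
      simp only [Fintype.card_prod, Fintype.card_fun, Fintype.card_bool, Fintype.card_fin]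
      rw [show 4*n+1 = n + (2*n + (1 + n)) by ring, pow_add, pow_add, pow_add, pow_one]
    have hBadCard : Bad.ncard = 2^(2*n) := by
      rw [hBadRange, ← Set.image_univ, Set.ncard_image_of_injective _ (eFun'_inj n),
        Set.ncard_univ, Nat.card_eq_fintype_card]
      simp only [Fintype.card_prod, Fintype.card_fun, Fintype.card_bool, Fintype.card_fin]
      rw [show 2*n = n + n by ring, pow_add]
    have hInjOn : Set.InjOn Gmap (Full \ Bad) := by
      rintro ⟨x, y, b, z⟩ ⟨⟨h1, h2, h3⟩, hnb⟩ ⟨x', y', b', z'⟩ ⟨⟨h1', h2', h3'⟩, hnb'⟩ heq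
      by_contra hne
      obtain ⟨k1, k2, k3, k4, k5, k6⟩ := key n x y b z x' y' b' z' h1 h2 h3 h1' h2' h3'
        (by simpa using hne) heq
      cases hb : b with
      | false => exact hnb ⟨⟨h1, h2, h3⟩, k3, hb⟩
      | true =>
        cases hb' : b' with
        | false => exact hnb' ⟨⟨h1', h2', h3'⟩, k4, hb'⟩
        | true => exact k5 (hb.trans hb'.symm)
    calc 2^(4*n+1) - 2^(2*n) = Full.ncard - Bad.ncard := by rw [hFullCard, hBadCard]
      _ = (Full \ Bad).ncard := (Set.ncard_diff hBadSub hBadFin).symm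
      _ = (Gmap '' (Full \ Bad)).ncard := (Set.ncard_image_of_injOn hInjOn).symm
      _ ≤ (Gmap '' Full).ncard :=
          Set.ncard_le_ncard (Set.image_mono Set.diff_subset) (hFullFin.image _)
  · intro x y b z x' y' b' z' hx hy hz hx' hy' hz' hne heq
    exact key n x y b z x' y' b' z' hx hy hz hx' hy' hz' hne heq
end
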